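/- Every two-sided ideal of the algebra T_n of upper triangular n×n complex matrices is principal, i.e., generated by a single element of T_n. -/

import Mathlib

/-- The set of upper triangular `n × n` complex matrices. -/
def UT (n : ℕ) : Set (Matrix (Fin n) (Fin n) ℂ) :=
  {M | ∀ i j : Fin n, j < i → M i j = 0}

/-- `I` is a two-sided ideal of the (sub)algebra with underlying set `A`. -/
def IsIdealIn {n : ℕ} (A I : Set (Matrix (Fin n) (Fin n) ℂ)) : Prop :=
  I ⊆ A ∧ (0 : Matrix (Fin n) (Fin n) ℂ) ∈ I ∧
    (∀ x ∈ I, ∀ y ∈ I, x + y ∈ I) ∧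
    (∀ c : ℂ, ∀ x ∈ I, c • x ∈ I) ∧
    (∀ a ∈ A, ∀ x ∈ I, a * x ∈ I ∧ x * a ∈ I)

open Matrix

/-- Diagonal matrix units are upper triangular. -/
lemma diag_unit_mem_UT {n : ℕ} (i : Fin n) : single i i (1 : ℂ) ∈ UT n := by
  intro a b hba
  rw [Matrix.single_apply_of_ne]
  rintro ⟨rfl, rfl⟩
  exact lt_irrefl _ hba

/-- The key matrix identity: multiplying by diagonal matrix units picks out one entry. -/
lemma pick_entry {n : ℕ} (M : Matrix (Fin n) (Fin n) ℂ) (i j : Fin n) :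
    single i i 1 * M * single j j 1 = single i j (M i j) := by
  ext a b
  simp [Matrix.mul_apply, Matrix.single, Finset.sum_ite_eq, ite_and]
  aesop

/-- A matrix is the sum of its entries times matrix units, indexed by pairs. -/
lemma matrix_eq_sum_pairs {n : ℕ} (M : Matrix (Fin n) (Fin n) ℂ) :
    M = ∑ p : Fin n × Fin n, single p.1 p.2 (M p.1 p.2) :=
  (Matrix.matrix_eq_sum_single M).trans (Fintype.sum_prod_type' _).symm

/-- Ideals are closed under finite sums. -/
lemma sum_mem_ideal {n : ℕ} {A I : Set (Matrix (Fin n) (Fin n) ℂ)} (hI : IsIdealIn A I)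
    {α : Type*} (s : Finset α) (f : α → Matrix (Fin n) (Fin n) ℂ)
    (h : ∀ a ∈ s, f a ∈ I) : (∑ a ∈ s, f a) ∈ I := by
  classical
  induction s using Finset.induction with
  | empty => simpa using hI.2.1
  | insert _ _ hx ih =>
    rw [Finset.sum_insert hx]
    exact hI.2.2.1 _ (h _ (Finset.mem_insert_self _ _)) _
      (ih fun a ha => h a (Finset.mem_insert_of_mem ha))

/-- From any element of an ideal we can extract entrywise matrix units. -/
lemma std_mem_ideal {n : ℕ} {I : Set (Matrix (Fin n) (Fin n) ℂ)} (hI : IsIdealIn (UT n) I)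
    {M : Matrix (Fin n) (Fin n) ℂ} (hM : M ∈ I) (i j : Fin n) :
    single i j (M i j) ∈ I := by
  have h1 := (hI.2.2.2.2 _ (diag_unit_mem_UT i) M hM).1
  have h2 := (hI.2.2.2.2 _ (diag_unit_mem_UT j) _ h1).2
  rwa [pick_entry] at h2

theorem stmt_0 (n : ℕ) (I : Set (Matrix (Fin n) (Fin n) ℂ))
    (hI : IsIdealIn (UT n) I) :
    ∃ g ∈ I, I = ⋂₀ {J | IsIdealIn (UT n) J ∧ g ∈ J} := by
  classical
  -- the support pattern of the ideal
  set S : Set (Fin n × Fin n) := {p | ∃ M ∈ I, M p.1 p.2 ≠ 0} with hS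
  -- matrix units for pattern positions lie in `I`
  have hE : ∀ p ∈ S, single p.1 p.2 (1 : ℂ) ∈ I := by
    rintro ⟨i, j⟩ ⟨M, hM, hMij⟩
    have := hI.2.2.2.1 (M i j)⁻¹ _ (std_mem_ideal hI hM i j)
    rwa [Matrix.smul_single, smul_eq_mul, inv_mul_cancel₀ hMij] at this
  -- the generator
  set g : Matrix (Fin n) (Fin n) ℂ :=
    ∑ p : Fin n × Fin n, if p ∈ S then single p.1 p.2 (1 : ℂ) else 0 with hg
  have hgI : g ∈ I := by
    apply sum_mem_ideal hI
    intro p _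
    by_cases hp : p ∈ S
    · simpa [hp] using hE p hp
    · simpa [hp] using hI.2.1
  -- entries of g
  have hgval : ∀ i j : Fin n, g i j = if (i, j) ∈ S then 1 else 0 := by
    intro i j
    rw [hg, Matrix.sum_apply]
    rw [Finset.sum_eq_single (i, j)]
    · by_cases hp : (i, j) ∈ S <;> simp [hp]
    · rintro ⟨a, b⟩ _ hab
      by_cases hp : ((a, b) : Fin n × Fin n) ∈ S
      · simp_all [Matrix.single]
      · simp [hp]
    · intro h; exact absurd (Finset.mem_univ _) h
  refine ⟨g, hgI, le_antisymm ?_ ?_⟩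
  · -- I ⊆ every ideal containing g
    intro M hM
    rintro J ⟨hJ, hgJ⟩
    -- matrix units for pattern positions lie in J
    have hEJ : ∀ p ∈ S, single p.1 p.2 (1 : ℂ) ∈ J := by
      rintro ⟨i, j⟩ hp
      have h := std_mem_ideal hJ hgJ i j
      rwa [hgval i j, if_pos hp] at h
    rw [matrix_eq_sum_pairs M]
    apply sum_mem_ideal hJ
    rintro ⟨i, j⟩ _
    by_cases hp : ((i, j) : Fin n × Fin n) ∈ S
    · have := hJ.2.2.2.1 (M i j) _ (hEJ _ hp)
      rwa [Matrix.smul_single, smul_eq_mul, mul_one] at this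
    · have hz : M i j = 0 := by
        by_contra h
        exact hp ⟨M, hM, h⟩
      simpa [hz] using hJ.2.1
  · -- the intersection is contained in I, since I is one of the ideals
    intro M hM
    exact hM I ⟨hI, hgI⟩
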